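/- arXiv:1802.07547 — 2 statements merged into one kernel-verified Lean document; each statement's English description precedes it below -/
import Mathlib

section
/- The map f : U(1) × SU(3) × SU(3) → S(U(3)×U(3)) given by f(a,A,B) = diag(aA, a^{-1}B) is a surjective group homomorphism with kernel {(1,E,E), (ω, ω^{-1}E, ωE), (ω^{-1}, ωE, ω^{-1}E)} where ω = exp(2πi/3). Consequently S(U(3)×U(3)) ≅ (U(1) × SU(3) × SU(3))/Z_3. -/
noncomputable section

/-- The special unitary group over index type `I`, as a subgroup of the unitary group. -/
def SU (I : Type) [Fintype I] [DecidableEq I] :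
    Subgroup (Matrix.unitaryGroup I ℂ) :=
  MonoidHom.ker (Matrix.detMonoidHom.comp (Matrix.unitaryGroup I ℂ).subtype)

/-- Underlying matrix of an element of `SU I`. -/
def mat {I : Type} [Fintype I] [DecidableEq I] (A : SU I) : Matrix I I ℂ := A.1.1

/-- `ω = exp(2πi/3)`, a primitive cube root of unity. -/
def ω : ℂ := Complex.exp (2 * Real.pi * Complex.I / 3)

/-- The map `f(a,A,B) = diag(aA, a⁻¹B)`, at the level of matrices
(indexed by `Fin 3 ⊕ Fin 3`). -/
def f2 (x : Circle × SU (Fin 3) × SU (Fin 3)) :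
    Matrix (Fin 3 ⊕ Fin 3) (Fin 3 ⊕ Fin 3) ℂ :=
  Matrix.fromBlocks ((x.1 : ℂ) • mat x.2.1) 0 0 (((x.1 : ℂ))⁻¹ • mat x.2.2)

/-- The subgroup `S(U(3)×U(3))` of `SU(6)`: block diagonal matrices `diag(P₁,P₂)` with
`P₁, P₂ ∈ U(3)` and `det P₁ · det P₂ = 1`, as a subset of `SU (Fin 3 ⊕ Fin 3)`. -/
def SU3U3 : Set (SU (Fin 3 ⊕ Fin 3)) :=
  {A | (mat A).toBlocks₁₂ = 0 ∧ (mat A).toBlocks₂₁ = 0 ∧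
    (mat A).toBlocks₁₁ ∈ Matrix.unitaryGroup (Fin 3) ℂ ∧
    (mat A).toBlocks₂₂ ∈ Matrix.unitaryGroup (Fin 3) ℂ ∧
    ((mat A).toBlocks₁₁).det * ((mat A).toBlocks₂₂).det = 1}

/-! ### Auxiliary lemmas -/

lemma mem_SU_iff {I : Type} [Fintype I] [DecidableEq I] (M : Matrix.unitaryGroup I ℂ) :
    M ∈ SU I ↔ Matrix.det (M : Matrix I I ℂ) = 1 := by
  rw [SU, MonoidHom.mem_ker, MonoidHom.comp_apply, Matrix.coe_detMonoidHom,
    Submonoid.coe_subtype]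

lemma det_mat {I : Type} [Fintype I] [DecidableEq I] (A : SU I) : (mat A).det = 1 :=
  (mem_SU_iff A.1).mp A.2

lemma mat_unitary {I : Type} [Fintype I] [DecidableEq I] (A : SU I) :
    mat A ∈ Matrix.unitaryGroup I ℂ := A.1.2

lemma mat_mul {I : Type} [Fintype I] [DecidableEq I] (A B : SU I) :
    mat (A * B) = mat A * mat B := rfl

lemma mat_one {I : Type} [Fintype I] [DecidableEq I] : mat (1 : SU I) = 1 := rfl

lemma circle_mul_star (a : Circle) : (a : ℂ) * star (a : ℂ) = 1 := by
  simp [Complex.mul_conj', Circle.norm_coe]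

lemma circle_inv_eq_star (a : Circle) : ((a : ℂ))⁻¹ = star (a : ℂ) := by
  rw [← Circle.coe_inv, Circle.coe_inv_eq_conj]; rfl

lemma smul_mem_unitary {I : Type} [Fintype I] [DecidableEq I] {a : ℂ}
    (ha : a * star a = 1) {P : Matrix I I ℂ} (hP : P ∈ Matrix.unitaryGroup I ℂ) :
    a • P ∈ Matrix.unitaryGroup I ℂ := by
  rw [Matrix.mem_unitaryGroup_iff] at hP ⊢
  rw [star_smul, smul_mul_smul_comm, hP, ha, one_smul]

lemma circle_inv_mul_star_inv (a : Circle) : ((a : ℂ))⁻¹ * star ((a : ℂ))⁻¹ = 1 := by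
  rw [circle_inv_eq_star, star_star, mul_comm]; exact circle_mul_star a

lemma f2_eq (x : Circle × SU (Fin 3) × SU (Fin 3)) :
    f2 x = Matrix.fromBlocks ((x.1 : ℂ) • mat x.2.1) 0 0 (((x.1 : ℂ))⁻¹ • mat x.2.2) := rfl

lemma f2_blocks₁₁ (x : Circle × SU (Fin 3) × SU (Fin 3)) :
    (f2 x).toBlocks₁₁ = (x.1 : ℂ) • mat x.2.1 := rfl
lemma f2_blocks₂₂ (x : Circle × SU (Fin 3) × SU (Fin 3)) :
    (f2 x).toBlocks₂₂ = ((x.1 : ℂ))⁻¹ • mat x.2.2 := rfl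
lemma f2_blocks₁₂ (x : Circle × SU (Fin 3) × SU (Fin 3)) : (f2 x).toBlocks₁₂ = 0 := rfl
lemma f2_blocks₂₁ (x : Circle × SU (Fin 3) × SU (Fin 3)) : (f2 x).toBlocks₂₁ = 0 := rfl

lemma det_blocks (x : Circle × SU (Fin 3) × SU (Fin 3)) :
    ((x.1 : ℂ) • mat x.2.1).det * ((((x.1 : ℂ))⁻¹) • mat x.2.2).det = 1 := by
  rw [Matrix.det_smul, Matrix.det_smul, det_mat, det_mat]
  simp only [Fintype.card_fin, mul_one]
  rw [inv_pow, mul_inv_cancel₀ (pow_ne_zero 3 (Circle.coe_ne_zero x.1))]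

lemma f2_unitary (x : Circle × SU (Fin 3) × SU (Fin 3)) :
    f2 x ∈ Matrix.unitaryGroup (Fin 3 ⊕ Fin 3) ℂ := by
  have h1 : (x.1 : ℂ) • mat x.2.1 ∈ Matrix.unitaryGroup (Fin 3) ℂ :=
    smul_mem_unitary (circle_mul_star x.1) (mat_unitary _)
  have h2 : ((x.1 : ℂ))⁻¹ • mat x.2.2 ∈ Matrix.unitaryGroup (Fin 3) ℂ :=
    smul_mem_unitary (circle_inv_mul_star_inv x.1) (mat_unitary _)
  rw [Matrix.mem_unitaryGroup_iff] at h1 h2 ⊢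
  rw [Matrix.star_eq_conjTranspose] at h1 h2 ⊢
  rw [f2_eq, Matrix.fromBlocks_conjTranspose, Matrix.fromBlocks_multiply]
  simp only [Matrix.conjTranspose_zero, Matrix.mul_zero, Matrix.zero_mul,
    add_zero, zero_add, h1, h2]
  exact Matrix.fromBlocks_one

lemma f2_det (x : Circle × SU (Fin 3) × SU (Fin 3)) : (f2 x).det = 1 := by
  rw [f2_eq, Matrix.det_fromBlocks_zero₂₁]
  exact det_blocks x

set_option maxRecDepth 20000 in
/-- `f2`, packaged as landing in `SU (Fin 3 ⊕ Fin 3)`. -/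
def F (x : Circle × SU (Fin 3) × SU (Fin 3)) : SU (Fin 3 ⊕ Fin 3) :=
  ⟨⟨f2 x, f2_unitary x⟩, (mem_SU_iff _).mpr (f2_det x)⟩

lemma mat_F (x : Circle × SU (Fin 3) × SU (Fin 3)) : mat (F x) = f2 x := rfl

lemma f2_mul (x y : Circle × SU (Fin 3) × SU (Fin 3)) : f2 (x * y) = f2 x * f2 y := by
  simp only [f2_eq, Prod.fst_mul, Prod.snd_mul, mat_mul, Circle.coe_mul,
    Matrix.fromBlocks_multiply, Matrix.zero_mul, Matrix.mul_zero, add_zero, zero_add,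
    Matrix.smul_mul, Matrix.mul_smul, mul_inv_rev, smul_zero, smul_smul]
  congr 1 <;> rw [mul_comm]

lemma F_mem : ∀ x, F x ∈ SU3U3 := by
  intro x
  refine ⟨f2_blocks₁₂ x, f2_blocks₂₁ x, ?_, ?_, ?_⟩
  · rw [mat_F, f2_blocks₁₁]
    exact smul_mem_unitary (circle_mul_star x.1) (mat_unitary _)
  · rw [mat_F, f2_blocks₂₂]
    exact smul_mem_unitary (circle_inv_mul_star_inv x.1) (mat_unitary _)
  · rw [mat_F, f2_blocks₁₁, f2_blocks₂₂]
    exact det_blocks x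

lemma omega_prim : IsPrimitiveRoot ω 3 := by
  have h := Complex.isPrimitiveRoot_exp 3 (by norm_num)
  have : ((3 : ℕ) : ℂ) = (3 : ℂ) := by norm_num
  rw [this] at h
  exact h

lemma omega_pow_three : ω ^ 3 = 1 := omega_prim.pow_eq_one

lemma omega_ne_zero : ω ≠ 0 := Complex.exp_ne_zero _

lemma omega_sq : ω ^ 2 = ω⁻¹ :=
  eq_inv_of_mul_eq_one_left (by rw [← pow_succ, omega_pow_three])

lemma toBlocks_one₁₁ :
    (1 : Matrix (Fin 3 ⊕ Fin 3) (Fin 3 ⊕ Fin 3) ℂ).toBlocks₁₁ = 1 := by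
  rw [← Matrix.fromBlocks_one, Matrix.toBlocks_fromBlocks₁₁]

lemma toBlocks_one₂₂ :
    (1 : Matrix (Fin 3 ⊕ Fin 3) (Fin 3 ⊕ Fin 3) ℂ).toBlocks₂₂ = 1 := by
  rw [← Matrix.fromBlocks_one, Matrix.toBlocks_fromBlocks₂₂]

lemma real_cube_eq_one {x : ℝ} (hx : 0 ≤ x) (h : x ^ 3 = 1) : x = 1 := by
  nlinarith [sq_nonneg (x - 1), sq_nonneg (x + 1)]

/-- kernel characterization -/
lemma ker_f2 (x : Circle × SU (Fin 3) × SU (Fin 3)) :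
    f2 x = 1 ↔
      ((x.1 : ℂ) = 1 ∧ mat x.2.1 = 1 ∧ mat x.2.2 = 1) ∨
      ((x.1 : ℂ) = ω ∧ mat x.2.1 = ω⁻¹ • 1 ∧ mat x.2.2 = ω • 1) ∨
      ((x.1 : ℂ) = ω⁻¹ ∧ mat x.2.1 = ω • 1 ∧ mat x.2.2 = ω⁻¹ • 1) := by
  have ha0 : (x.1 : ℂ) ≠ 0 := Circle.coe_ne_zero x.1
  constructor
  · intro h
    have h1 : (x.1 : ℂ) • mat x.2.1 = 1 := by
      have := congrArg (fun M => Matrix.toBlocks₁₁ M) h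
      simpa only [f2_blocks₁₁, toBlocks_one₁₁] using this
    have h2 : ((x.1 : ℂ))⁻¹ • mat x.2.2 = 1 := by
      have := congrArg (fun M => Matrix.toBlocks₂₂ M) h
      simpa only [f2_blocks₂₂, toBlocks_one₂₂] using this
    have hA : mat x.2.1 = ((x.1 : ℂ))⁻¹ • 1 := by
      rw [← h1, smul_smul, inv_mul_cancel₀ ha0, one_smul]
    have hB : mat x.2.2 = (x.1 : ℂ) • 1 := by
      rw [← h2, smul_smul, mul_inv_cancel₀ ha0, one_smul]
    have hdet := det_mat x.2.1
    rw [hA, Matrix.det_smul, Matrix.det_one, mul_one, Fintype.card_fin, inv_pow] at hdet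
    have ha3 : (x.1 : ℂ) ^ 3 = 1 := inv_eq_one.mp hdet
    obtain ⟨i, hi, hia⟩ := omega_prim.eq_pow_of_pow_eq_one ha3
    interval_cases i
    · rw [pow_zero] at hia
      exact Or.inl ⟨hia.symm, by rw [hA, ← hia, inv_one, one_smul],
        by rw [hB, ← hia, one_smul]⟩
    · rw [pow_one] at hia
      exact Or.inr (Or.inl ⟨hia.symm, by rw [hA, ← hia], by rw [hB, ← hia]⟩)
    · rw [omega_sq] at hia
      exact Or.inr (Or.inr ⟨hia.symm, by rw [hA, ← hia, inv_inv], by rw [hB, ← hia]⟩)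
  · rintro (⟨h1, h2, h3⟩ | ⟨h1, h2, h3⟩ | ⟨h1, h2, h3⟩) <;>
      rw [f2_eq, h1, h2, h3] <;>
      simp [smul_smul, mul_inv_cancel₀ omega_ne_zero, inv_mul_cancel₀ omega_ne_zero,
        inv_inv, Matrix.fromBlocks_one]

lemma abs_of_unitary {d : ℂ} (h : d * star d = 1) : ‖d‖ = 1 := by
  have h' := congrArg (fun z : ℂ => ‖z‖) h
  simp only [norm_mul, norm_one, Complex.star_def, Complex.norm_conj] at h'
  nlinarith [norm_nonneg d]

lemma f2_surj : ∀ A ∈ SU3U3, ∃ x, f2 x = mat A := by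
  rintro A ⟨h12, h21, hP, hQ, hdet⟩
  obtain ⟨c, hc⟩ := IsAlgClosed.exists_pow_nat_eq ((mat A).toBlocks₁₁.det) (n := 3) (by norm_num)
  have habs : ‖((mat A).toBlocks₁₁.det)‖ = 1 :=
    abs_of_unitary (Matrix.det_of_mem_unitary hP).2
  have habsc : ‖c‖ = 1 := by
    refine real_cube_eq_one (norm_nonneg c) ?_
    rw [← norm_pow, hc, habs]
  have hc0 : c ≠ 0 := by
    intro h; rw [h] at habsc; simp at habsc
  have hcc : c * star c = 1 := by
    rw [Complex.star_def, Complex.mul_conj]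
    rw [Complex.normSq_eq_norm_sq, habsc]
    norm_num
  have hcc' : c⁻¹ * star c⁻¹ = 1 := by
    rw [star_inv₀, ← mul_inv_rev, mul_comm, hcc, inv_one]
  have hamem : c ∈ Submonoid.unitSphere ℂ := by
    show c ∈ Metric.sphere (0 : ℂ) 1
    rw [mem_sphere_zero_iff_norm, habsc]
  let a : Circle := ⟨c, hamem⟩
  let A₁ : SU (Fin 3) := ⟨⟨c⁻¹ • (mat A).toBlocks₁₁, smul_mem_unitary hcc' hP⟩,
    (mem_SU_iff _).mpr (by
      rw [Matrix.det_smul, Fintype.card_fin, ← hc, inv_pow,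
        inv_mul_cancel₀ (pow_ne_zero 3 hc0)])⟩
  let A₂ : SU (Fin 3) := ⟨⟨c • (mat A).toBlocks₂₂, smul_mem_unitary hcc hQ⟩,
    (mem_SU_iff _).mpr (by
      rw [Matrix.det_smul, Fintype.card_fin, hc]; exact hdet)⟩
  refine ⟨(a, A₁, A₂), ?_⟩
  show Matrix.fromBlocks (c • (c⁻¹ • (mat A).toBlocks₁₁)) 0 0
    (c⁻¹ • (c • (mat A).toBlocks₂₂)) = mat A
  rw [smul_smul, smul_smul, mul_inv_cancel₀ hc0, inv_mul_cancel₀ hc0, one_smul, one_smul]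
  conv_rhs => rw [← Matrix.fromBlocks_toBlocks (mat A), h12, h21]


/-- `f(a,A,B) = diag(aA, a⁻¹B)` is a surjective group homomorphism from
`U(1) × SU(3) × SU(3)` onto `S(U(3)×U(3))` with kernel
`{(1,E,E), (ω,ω⁻¹E,ωE), (ω⁻¹,ωE,ω⁻¹E)}`, `ω = exp(2πi/3)`; consequently
`S(U(3)×U(3)) ≅ (U(1) × SU(3) × SU(3))/ℤ₃`. -/
theorem sU3U3_iso_circle_su3_su3_quot_zmod3 :
    -- `f` is a group homomorphism
    (∀ x y : Circle × SU (Fin 3) × SU (Fin 3), f2 (x * y) = f2 x * f2 y) ∧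
    -- `f` takes values in `S(U(3)×U(3))`
    (∀ x, ∃ A : SU (Fin 3 ⊕ Fin 3), A ∈ SU3U3 ∧ mat A = f2 x) ∧
    -- `f` is surjective onto `S(U(3)×U(3))`
    (∀ A ∈ SU3U3, ∃ x, f2 x = mat A) ∧
    -- the kernel of `f` is `{(1,E,E), (ω,ω⁻¹E,ωE), (ω⁻¹,ωE,ω⁻¹E)}`
    (∀ x : Circle × SU (Fin 3) × SU (Fin 3),
      (f2 x = 1 ↔
        ((x.1 : ℂ) = 1 ∧ mat x.2.1 = 1 ∧ mat x.2.2 = 1) ∨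
        ((x.1 : ℂ) = ω ∧ mat x.2.1 = ω⁻¹ • 1 ∧ mat x.2.2 = ω • 1) ∨
        ((x.1 : ℂ) = ω⁻¹ ∧ mat x.2.1 = ω • 1 ∧ mat x.2.2 = ω⁻¹ • 1))) ∧
    -- consequently `S(U(3)×U(3)) ≅ (U(1) × SU(3) × SU(3))/ℤ₃`
    (∀ (S : Subgroup (SU (Fin 3 ⊕ Fin 3)))
      (K : Subgroup (Circle × SU (Fin 3) × SU (Fin 3))) [K.Normal],
      (S : Set (SU (Fin 3 ⊕ Fin 3))) = SU3U3 →
      (K : Set (Circle × SU (Fin 3) × SU (Fin 3))) = {x | f2 x = 1} →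
        Nonempty (S ≃* (Circle × SU (Fin 3) × SU (Fin 3)) ⧸ K)) := by
  refine ⟨f2_mul, fun x => ⟨F x, F_mem x, mat_F x⟩, f2_surj, ker_f2, ?_⟩
  intro S K hKn hS hK
  have F_mul : ∀ x y, F (x * y) = F x * F y :=
    fun x y => Subtype.ext (Subtype.ext (f2_mul x y))
  let φ : (Circle × SU (Fin 3) × SU (Fin 3)) →* SU (Fin 3 ⊕ Fin 3) := MonoidHom.mk' F F_mul
  have hmem : ∀ x, φ x ∈ S := fun x => by
    rw [← SetLike.mem_coe, hS]; exact F_mem x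
  let ψ := φ.codRestrict S hmem
  have hsurj : Function.Surjective ψ := by
    rintro ⟨A, hA⟩
    have hA' : A ∈ SU3U3 := by rw [← hS]; exact hA
    obtain ⟨x, hx⟩ := f2_surj A hA'
    exact ⟨x, Subtype.ext (Subtype.ext (Subtype.ext hx))⟩
  have hker : ψ.ker = K := by
    ext x
    rw [MonoidHom.mem_ker]
    have h1 : (ψ x = 1) ↔ f2 x = 1 := by
      rw [Subtype.ext_iff, Subtype.ext_iff, Subtype.ext_iff]
      exact Iff.rfl
    rw [h1, ← SetLike.mem_coe, hK, Set.mem_setOf_eq]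
  exact ⟨(QuotientGroup.quotientKerEquivOfSurjective ψ hsurj).symm.trans
    (QuotientGroup.quotientMulEquivOfEq hker)⟩
end
end

section
/- For p, q ∈ Sp(1) (unit quaternions), the map φ(p,q) on the Cayley algebra H ⊕ He₄ defined by φ(p,q)(m + ne₄) = qmq̄ + (pnq̄)e₄ is an algebra automorphism of the Cayley algebra, and φ : Sp(1) × Sp(1) → Aut(octonions) is a group homomorphism with kernel {(1,1), (−1,−1)}. -/
open Quaternion

noncomputable section

/-- The Cayley algebra (octonions), realized as `ℍ ⊕ ℍe₄`. -/
abbrev Oct := ℍ[ℝ] × ℍ[ℝ]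

/-- Octonion multiplication: `(a + be₄)(c + de₄) = (ac - d̄b) + (da + bc̄)e₄`. -/
def omul (x y : Oct) : Oct :=
  (x.1 * y.1 - star y.2 * x.2, y.2 * x.1 + x.2 * star y.1)

/-- `φ(p,q)(m + ne₄) = qmq̄ + (pnq̄)e₄`. -/
def φ (p q : ℍ[ℝ]) (x : Oct) : Oct := (q * x.1 * star q, p * x.2 * star q)

lemma cancel_mid {c d : ℍ[ℝ]} (h : c * d = 1) (z : ℍ[ℝ]) : c * (d * z) = z := by
  rw [← mul_assoc, h, one_mul]

/-- For unit quaternions `p, q`, the map `φ(p,q)` is an algebra automorphism of the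
Cayley algebra, `φ : Sp(1) × Sp(1) → Aut(octonions)` is a group homomorphism, and its
kernel is `{(1,1), (-1,-1)}`. -/
theorem φ_hom_with_kernel_pm_one :
    ∀ p q : ℍ[ℝ], ‖p‖ = 1 → ‖q‖ = 1 →
      -- `φ(p,q)` is multiplicative
      (∀ x y : Oct, φ p q (omul x y) = omul (φ p q x) (φ p q y)) ∧
      -- `φ(p,q)` is `ℝ`-linear
      (∀ x y : Oct, φ p q (x + y) = φ p q x + φ p q y) ∧
      (∀ (r : ℝ) (x : Oct), φ p q (r • x) = r • φ p q x) ∧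
      -- `φ(p,q)` is bijective
      Function.Bijective (φ p q) ∧
      -- `φ` is a group homomorphism
      (∀ p' q' : ℍ[ℝ], ‖p'‖ = 1 → ‖q'‖ = 1 →
        ∀ x : Oct, φ (p * p') (q * q') x = φ p q (φ p' q' x)) ∧
      -- the kernel of `φ` is `{(1,1), (-1,-1)}`
      ((∀ x : Oct, φ p q x = x) ↔ (p = 1 ∧ q = 1) ∨ (p = -1 ∧ q = -1)) := by
  intro p q hp hq
  have hqs : q * star q = 1 := by
    rw [Quaternion.self_mul_star, Quaternion.normSq_eq_norm_mul_self, hq]; norm_num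
  have hsq : star q * q = 1 := by
    rw [Quaternion.star_mul_self, Quaternion.normSq_eq_norm_mul_self, hq]; norm_num
  have hps : p * star p = 1 := by
    rw [Quaternion.self_mul_star, Quaternion.normSq_eq_norm_mul_self, hp]; norm_num
  have hsp : star p * p = 1 := by
    rw [Quaternion.star_mul_self, Quaternion.normSq_eq_norm_mul_self, hp]; norm_num
  refine ⟨?_, ?_, ?_, ?_, ?_, ?_⟩
  · intro x y
    simp only [φ, omul, Prod.mk.injEq, star_mul, star_star, mul_sub, sub_mul, mul_add,
      add_mul, mul_assoc, cancel_mid hsq, cancel_mid hqs, cancel_mid hsp, cancel_mid hps]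

  · intro x y
    simp only [φ, Prod.ext_iff, Prod.fst_add, Prod.snd_add, mul_add, add_mul]
    exact ⟨trivial, trivial⟩

  · intro r x
    simp [φ, Prod.ext_iff, mul_smul_comm, smul_mul_assoc]
  · have hLI : Function.LeftInverse (fun y : Oct => (star q * y.1 * q, star p * y.2 * q))
        (φ p q) := by
      intro x
      simp only [φ, mul_assoc, cancel_mid hsq, cancel_mid hsp, hsq, mul_one]
    have hRI : Function.RightInverse (fun y : Oct => (star q * y.1 * q, star p * y.2 * q))
        (φ p q) := by
      intro x
      simp only [φ, mul_assoc, cancel_mid hqs, cancel_mid hps, hqs, mul_one]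
    exact ⟨hLI.injective, hRI.surjective⟩
  · intro p' q' _ _ x
    simp only [φ, star_mul, mul_assoc]
  · constructor
    · intro h
      have hcomm : ∀ m : ℍ[ℝ], q * m = m * q := by
        intro m
        have h1 := (Prod.ext_iff.mp (h (m, 0))).1
        simp only [φ] at h1
        have := congrArg (fun z => z * q) h1
        simpa [mul_assoc, cancel_mid hsq, hsq, mul_one] using this
      have hi := hcomm ⟨0, 1, 0, 0⟩
      have hj := hcomm ⟨0, 0, 1, 0⟩
      rw [Quaternion.ext_iff] at hi hj
      erw [Quaternion.re_mul q, Quaternion.re_mul _ q, Quaternion.imI_mul q, Quaternion.imI_mul _ q,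
        Quaternion.imJ_mul q, Quaternion.imJ_mul _ q, Quaternion.imK_mul q, Quaternion.imK_mul _ q] at hi hj
      simp [Quaternion.re_mul, Quaternion.imI_mul, Quaternion.imJ_mul,
        Quaternion.imK_mul] at hi hj
      obtain ⟨hk1, hj1⟩ := hi
      obtain ⟨hk2, hi1⟩ := hj
      have hK : q.imK = 0 := by linarith
      have hJ : q.imJ = 0 := by linarith
      have hI : q.imI = 0 := by linarith
      have hqre : q = (q.re : ℍ[ℝ]) := by
        ext <;> simp [hI, hJ, hK]
      have habs : |q.re| = 1 := by
        rw [hqre] at hq; simpa using hq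
      have h2 := (Prod.ext_iff.mp (h (0, 1))).2
      simp only [φ, mul_one] at h2
      rcases (abs_eq (by norm_num : (0:ℝ) ≤ 1)).mp habs with h1 | h1
      · have hq1 : q = 1 := by rw [hqre, h1]; norm_num
        left
        refine ⟨?_, hq1⟩
        rw [hq1] at h2; simpa using h2
      · have hq1 : q = -1 := by rw [hqre, h1]; norm_num
        right
        refine ⟨?_, hq1⟩
        rw [hq1] at h2
        simp only [star_neg, star_one, mul_neg, mul_one, neg_eq_iff_eq_neg] at h2
        exact h2
    · rintro (⟨hp1, hq1⟩ | ⟨hp1, hq1⟩) <;> subst hp1 <;> subst hq1 <;>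
        intro x <;> simp [φ]
end
end
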